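/- For positive definite matrices A and B, the harmonic mean is dominated by the geometric mean: ((A⁻¹+B⁻¹)/2)⁻¹ ≤ A^{1/2}(A^{−1/2} B A^{−1/2})^{1/2} A^{1/2} in the Loewner order. -/

import Mathlib

open Matrix ComplexOrder

/-- Conjugation by an invertible matrix preserves positive definiteness. -/
lemma posDef_conj_aux {n : ℕ} {B N : Matrix (Fin n) (Fin n) ℂ}
    (hB : B.PosDef) (hN : IsUnit N) : (N * B * Nᴴ).PosDef := by
  refine ⟨?_, fun x hx => ?_⟩
  · have := hB.isHermitian
    unfold Matrix.IsHermitian at *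
    simp [Matrix.conjTranspose_mul, this, mul_assoc]
  · exact (hB.mul_mul_conjTranspose_same (Matrix.vecMul_injective_iff_isUnit.mpr hN)).2 hx
  
/-- cfc of a function nonnegative on the spectrum is positive semidefinite. -/
lemma cfc_posSemidef {n : ℕ} {A : Matrix (Fin n) (Fin n) ℂ}
    (hA : A.IsHermitian) {f : ℝ → ℝ} (hf : ∀ x ∈ spectrum ℝ A, 0 ≤ f x) :
    (cfc f A).PosSemidef := by
  rw [hA.cfc_eq]
  unfold Matrix.IsHermitian.cfc
  rw [Unitary.conjStarAlgAut_apply, Matrix.star_eq_conjTranspose]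
  apply Matrix.PosSemidef.mul_mul_conjTranspose_same
  apply Matrix.PosSemidef.diagonal
  rw [Pi.le_def]
  intro i
  simpa using hf _ (hA.eigenvalues_mem_spectrum_real i)

/-- The harmonic mean is dominated by the geometric mean, in the Loewner order. -/
theorem harmonic_le_geometric {n : ℕ} (A B : Matrix (Fin n) (Fin n) ℂ)
    (hA : A.PosDef) (hB : B.PosDef) :
    (cfc Real.sqrt A *
        cfc Real.sqrt ((cfc Real.sqrt A)⁻¹ * B * (cfc Real.sqrt A)⁻¹) *
        cfc Real.sqrt A -
      ((2 : ℂ)⁻¹ • (A⁻¹ + B⁻¹))⁻¹).PosSemidef := by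
  set S := cfc Real.sqrt A with hS_def
  -- basic facts about A
  have hAsa : IsSelfAdjoint A := hA.isHermitian
  have hAspec : ∀ x ∈ spectrum ℝ A, 0 < x := by
    intro x hx
    rw [hA.isHermitian.spectrum_real_eq_range_eigenvalues] at hx
    obtain ⟨i, rfl⟩ := hx
    exact hA.eigenvalues_pos i
  -- S is hermitian
  have hSsa : IsSelfAdjoint S := cfc_predicate Real.sqrt A
  have hSherm : S.IsHermitian := hSsa
  -- S * S = A
  have hSS : S * S = A := by
    rw [hS_def, ← cfc_mul Real.sqrt Real.sqrt A]
    have : cfc (fun x => Real.sqrt x * Real.sqrt x) A = cfc (id : ℝ → ℝ) A :=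
      cfc_congr fun x hx => Real.mul_self_sqrt (hAspec x hx).le
    rw [this, cfc_id ℝ A]
  -- S is a unit
  have hSdet : IsUnit S.det := by
    have : IsUnit (S.det * S.det) := by
      rw [← Matrix.det_mul, hSS]
      exact hA.det_pos.ne'.isUnit
    exact isUnit_of_mul_isUnit_left this
  have hSu : IsUnit S := (Matrix.isUnit_iff_isUnit_det S).mpr hSdet
  have hSiherm : (S⁻¹).IsHermitian := hSherm.inv
  have hSiu : IsUnit S⁻¹ := (Matrix.isUnit_nonsing_inv_iff).mpr hSu
  -- C := S⁻¹ * B * S⁻¹ is positive definite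
  set C := S⁻¹ * B * S⁻¹ with hC_def
  have hC : C.PosDef := by
    have := posDef_conj_aux hB hSiu
    rwa [hSiherm.eq] at this
  have hCsa : IsSelfAdjoint C := hC.isHermitian
  have hCspec : ∀ x ∈ spectrum ℝ C, 0 < x := by
    intro x hx
    rw [hC.isHermitian.spectrum_real_eq_range_eigenvalues] at hx
    obtain ⟨i, rfl⟩ := hx
    exact hC.eigenvalues_pos i
  have hCu : IsUnit C := hC.isUnit
  -- the function g
  set g : ℝ → ℝ := fun x => (2 : ℝ)⁻¹ * (1 + x⁻¹) with hg_def
  have hg_pos : ∀ x ∈ spectrum ℝ C, 0 < g x := by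
    intro x hx
    have := hCspec x hx
    positivity
  have hg_cont : ContinuousOn g (spectrum ℝ C) := by
    apply ContinuousOn.mul continuousOn_const
    apply ContinuousOn.add continuousOn_const
    exact ContinuousOn.inv₀ continuousOn_id fun x hx => (hCspec x hx).ne'
  -- continuity facts
  have hinv_cont : ContinuousOn (fun x : ℝ => x⁻¹) (spectrum ℝ C) :=
    ContinuousOn.inv₀ continuousOn_id fun x hx => (hCspec x hx).ne'
  have hone_inv_cont : ContinuousOn (fun x : ℝ => 1 + x⁻¹) (spectrum ℝ C) :=
    ContinuousOn.add continuousOn_const hinv_cont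
  -- X = cfc g C
  have hX : (2 : ℂ)⁻¹ • ((1 : Matrix (Fin n) (Fin n) ℂ) + C⁻¹) = cfc g C := by
    have h1 : cfc g C = (2 : ℝ)⁻¹ • cfc (fun x : ℝ => 1 + x⁻¹) C := by
      rw [hg_def]
      exact cfc_const_mul ((2:ℝ)⁻¹) (fun x : ℝ => 1 + x⁻¹) C hone_inv_cont
    have h2 : cfc (fun x : ℝ => 1 + x⁻¹) C = 1 + C⁻¹ := by
      have h3 : cfc (fun x : ℝ => x⁻¹) C = C⁻¹ := by
        have := cfc_inv_id (R := ℝ) hCu.unit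
        rwa [IsUnit.unit_spec, Matrix.coe_units_inv, IsUnit.unit_spec] at this
      have h4 := cfc_add (a := C) (fun _ : ℝ => (1:ℝ)) (fun x : ℝ => x⁻¹) continuousOn_const
        hinv_cont
      rw [h4, h3, cfc_const_one ℝ C hCsa]
    rw [h1, h2]
    ext i j
    simp [Matrix.smul_apply, Complex.real_smul]
    ring
  -- spectrum facts for inverse of cfc g C
  have hXinv : ((2 : ℂ)⁻¹ • ((1 : Matrix (Fin n) (Fin n) ℂ) + C⁻¹))⁻¹
      = cfc (fun x => (g x)⁻¹) C := by
    rw [hX, cfc_inv g C (fun x hx => (hg_pos x hx).ne') hg_cont hCsa,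
      ← Matrix.nonsing_inv_eq_ringInverse]
  -- the middle matrix M is PSD
  have hM : (cfc Real.sqrt C - ((2 : ℂ)⁻¹ • ((1 : Matrix (Fin n) (Fin n) ℂ) + C⁻¹))⁻¹).PosSemidef := by
    rw [hXinv, ← cfc_sub Real.sqrt (fun x => (g x)⁻¹) C
      (by fun_prop) (hg_cont.inv₀ fun x hx => (hg_pos x hx).ne')]
    apply cfc_posSemidef hC.isHermitian
    intro x hx
    have hx0 : 0 < x := hCspec x hx
    have hs : Real.sqrt x * Real.sqrt x = x := Real.mul_self_sqrt hx0.le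
    have hs0 : 0 < Real.sqrt x := Real.sqrt_pos.mpr hx0
    have hgx : g x = (x + 1) / (2 * x) := by
      rw [hg_def]; field_simp
    rw [sub_nonneg, hgx, inv_div, div_le_iff₀ (by positivity)]
    nlinarith [sq_nonneg (Real.sqrt x - 1), hs0.le]
  -- rewrite the harmonic mean
  have hH : ((2 : ℂ)⁻¹ • (A⁻¹ + B⁻¹))⁻¹
      = S * ((2 : ℂ)⁻¹ • ((1 : Matrix (Fin n) (Fin n) ℂ) + C⁻¹))⁻¹ * S := by
    have hSinvSinv : S⁻¹ * S⁻¹ = A⁻¹ := by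
      rw [← Matrix.mul_inv_rev, hSS]
    have hSCS : S * C * S = B := by
      rw [hC_def]
      rw [show S * (S⁻¹ * B * S⁻¹) * S = (S * S⁻¹) * B * (S⁻¹ * S) by simp only [mul_assoc]]
      rw [Matrix.mul_nonsing_inv S hSdet, Matrix.nonsing_inv_mul S hSdet, one_mul, mul_one]
    have key : (2 : ℂ)⁻¹ • (A⁻¹ + B⁻¹)
        = S⁻¹ * ((2 : ℂ)⁻¹ • ((1 : Matrix (Fin n) (Fin n) ℂ) + C⁻¹)) * S⁻¹ := by
      rw [Matrix.mul_smul, Matrix.smul_mul]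
      congr 1
      rw [Matrix.mul_add, Matrix.add_mul, mul_one, hSinvSinv]
      congr 1
      rw [← hSCS, Matrix.mul_inv_rev, Matrix.mul_inv_rev]
      simp only [mul_assoc]
    rw [key, Matrix.mul_inv_rev, Matrix.mul_inv_rev,
      Matrix.nonsing_inv_nonsing_inv S hSdet]
    simp only [mul_assoc]
  rw [hH]
  have : S * cfc Real.sqrt C * S - S * ((2 : ℂ)⁻¹ • ((1 : Matrix (Fin n) (Fin n) ℂ) + C⁻¹))⁻¹ * S
      = S * (cfc Real.sqrt C - ((2 : ℂ)⁻¹ • ((1 : Matrix (Fin n) (Fin n) ℂ) + C⁻¹))⁻¹) * Sᴴ := by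
    rw [hSherm.eq, mul_sub, sub_mul]
  rw [this]
  exact hM.mul_mul_conjTranspose_same S
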